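/- Let p be a prime and let A, B ⊆ Z/pZ be nonempty with |B| ≥ 3. If |A + B| ≤ |A| + |B| < p and B is an arithmetic progression with difference d, then A + B is also an arithmetic progression with difference d. -/

import Mathlib

open scoped Pointwise

/-- `A` is an arithmetic progression in `ZMod p` with difference `d`:
`A = {a, a + d, …, a + (|A| - 1) d}` for some `a`, where `d ≠ 0`. -/
def IsAPWith {p : ℕ} (A : Finset (ZMod p)) (d : ZMod p) : Prop :=
  d ≠ 0 ∧ ∃ a : ZMod p, A = (Finset.range A.card).image fun i : ℕ => a + (i : ZMod p) * d

open Finset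


lemma AP_closure_mem {p : ℕ} (hp : p.Prime) {d : ZMod p} (hd : d ≠ 0)
    {S : Finset (ZMod p)} (hS : S.Nonempty) (hcl : ∀ x ∈ S, x + d ∈ S) :
    ∀ y : ZMod p, y ∈ S := by
  haveI : Fact p.Prime := ⟨hp⟩
  obtain ⟨x0, hx0⟩ := hS
  have key : ∀ n : ℕ, x0 + (n : ZMod p) * d ∈ S := by
    intro n
    induction n with
    | zero => simpa using hx0
    | succ n ih =>
      have h := hcl _ ih
      have he : x0 + ((n : ℕ) + 1 : ZMod p) * d = x0 + (n : ZMod p) * d + d := by ring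
      rw [Nat.cast_succ, he]
      exact h
  intro y
  have h1 : (((y - x0) * d⁻¹).val : ZMod p) = (y - x0) * d⁻¹ := by
    rw [ZMod.natCast_val, ZMod.cast_id]
  have h2 := key ((y - x0) * d⁻¹).val
  rw [h1] at h2
  have h3 : (y - x0) * d⁻¹ * d = y - x0 := by field_simp
  rw [h3] at h2
  simpa using h2

lemma AP_closure_card {p : ℕ} (hp : p.Prime) {d : ZMod p} (hd : d ≠ 0)
    {S : Finset (ZMod p)} (hS : S.Nonempty) (hcl : ∀ x ∈ S, x + d ∈ S) :
    S.card = p := by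
  haveI : NeZero p := ⟨hp.ne_zero⟩
  have h := AP_closure_mem hp hd hS hcl
  have : S = Finset.univ := Finset.eq_univ_of_forall h
  rw [this, Finset.card_univ, ZMod.card]

lemma AP_arc {p : ℕ} (hp : p.Prime) {d : ZMod p} (hd : d ≠ 0) :
    ∀ (n : ℕ) (S : Finset (ZMod p)), S.card = n → S.Nonempty → S.card < p →
      (S.filter (fun x => x + d ∉ S)).card = 1 →
      ∃ a, S = (Finset.range S.card).image fun i : ℕ => a + (i : ZMod p) * d := by
  haveI : Fact p.Prime := ⟨hp⟩
  intro n
  induction n with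
  | zero =>
    intro S hc hne _ _
    exact absurd (Finset.card_eq_zero.mp hc) hne.ne_empty
  | succ n ih =>
    intro S hc hne hlt hfil
    by_cases hn : n = 0
    · subst hn
      obtain ⟨a, rfl⟩ := Finset.card_eq_one.mp hc
      exact ⟨a, by simp⟩
    · obtain ⟨m, rfl⟩ : ∃ m, n = m + 1 := ⟨n - 1, by omega⟩
      obtain ⟨c, hcset⟩ := Finset.card_eq_one.mp hfil
      have hcmem : c ∈ S.filter (fun x => x + d ∉ S) := by rw [hcset]; exact mem_singleton_self c
      have hcS : c ∈ S := (mem_filter.mp hcmem).1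
      have hcd : c + d ∉ S := (mem_filter.mp hcmem).2
      have huniq : ∀ x ∈ S, x + d ∉ S → x = c := by
        intro x hx hxd
        have : x ∈ S.filter (fun x => x + d ∉ S) := mem_filter.mpr ⟨hx, hxd⟩
        rw [hcset] at this
        exact mem_singleton.mp this
      set S' := S.erase c with hS'def
      have hcS' : S'.card = m + 1 := by rw [hS'def, card_erase_of_mem hcS, hc]; omega
      have hne' : S'.Nonempty := card_pos.mp (by omega)
      have hstep : c - d ∈ S := by
        by_contra hnot
        have hcl : ∀ x ∈ S', x + d ∈ S' := by
          intro x hx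
          have hxS : x ∈ S := mem_of_mem_erase hx
          have hxne : x ≠ c := ne_of_mem_erase hx
          have hxd : x + d ∈ S := by
            by_contra h; exact hxne (huniq x hxS h)
          refine mem_erase.mpr ⟨?_, hxd⟩
          intro h
          apply hnot
          rw [← h]
          simpa using hxS
        have := AP_closure_card hp hd hne' hcl
        omega
      have hfil' : (S'.filter (fun x => x + d ∉ S')).card = 1 := by
        have hset : S'.filter (fun x => x + d ∉ S') = {c - d} := by
          ext x
          simp only [hS'def, mem_filter, mem_erase, mem_singleton, not_and]
          constructor
          · rintro ⟨⟨hxc, hxS⟩, hxd⟩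
            by_cases h : x + d ∈ S
            · have hxdc : x + d = c := by
                by_contra hne''
                exact (hxd hne'') h
              exact eq_sub_of_add_eq hxdc
            · exact absurd (huniq x hxS h) hxc
          · rintro rfl
            refine ⟨⟨?_, hstep⟩, ?_⟩
            · intro h
              exact hd (by linear_combination -h)
            · intro h
              rw [sub_add_cancel] at h
              exact absurd rfl h
        rw [hset, card_singleton]
      obtain ⟨a, ha⟩ := ih S' hcS' hne' (by omega) hfil'
      rw [hcS'] at ha
      have hmemtop : a + (m : ZMod p) * d ∈ S' := by
        rw [ha]
        exact mem_image.mpr ⟨m, mem_range.mpr (Nat.lt_succ_self m), rfl⟩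
      have hnottop : (a + (m : ZMod p) * d) + d ∉ S' := by
        rw [ha]
        intro hmem'
        obtain ⟨i, hi, hie⟩ := mem_image.mp hmem'
        rw [mem_range] at hi
        have h1 : (i : ZMod p) * d = ((m : ZMod p) + 1) * d := by
          have := hie
          have h' : (i : ZMod p) * d = (m : ZMod p) * d + d := by linear_combination this
          rw [h']; ring
        have h2 : (i : ZMod p) = ((m + 1 : ℕ) : ZMod p) := by
          have := mul_right_cancel₀ hd h1
          rw [this]; push_cast; ring
        have h3 : i ≡ m + 1 [MOD p] := (ZMod.natCast_eq_natCast_iff _ _ _).mp h2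
        have h4 : i % p = (m + 1) % p := h3
        rw [Nat.mod_eq_of_lt (by omega), Nat.mod_eq_of_lt (by omega)] at h4
        omega
      have htop : a + (m : ZMod p) * d = c - d := by
        have : a + (m : ZMod p) * d ∈ S'.filter (fun x => x + d ∉ S') :=
          mem_filter.mpr ⟨hmemtop, hnottop⟩
        have hset2 : S'.filter (fun x => x + d ∉ S') = {c - d} := by
          apply Finset.eq_singleton_iff_unique_mem.mpr
          constructor
          · refine mem_filter.mpr ⟨?_, ?_⟩
            · exact mem_erase.mpr ⟨fun h => hd (by linear_combination -h), hstep⟩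
            · rw [sub_add_cancel]; exact notMem_erase c S
          · intro x hx
            obtain ⟨hxS', hxd⟩ := mem_filter.mp hx
            have hxS : x ∈ S := mem_of_mem_erase hxS'
            have hxc : x ≠ c := ne_of_mem_erase hxS'
            by_cases h : x + d ∈ S
            · have hxdc : x + d = c := by
                by_contra hne''
                exact hxd (mem_erase.mpr ⟨hne'', h⟩)
              exact eq_sub_of_add_eq hxdc
            · exact absurd (huniq x hxS h) hxc
        rw [hset2] at this
        exact mem_singleton.mp this
      have hc2 : c = a + ((m + 1 : ℕ) : ZMod p) * d := by
        have : c = a + (m : ZMod p) * d + d := by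
          rw [htop]; ring
        rw [this]; push_cast; ring
      refine ⟨a, ?_⟩
      rw [hc]
      have hSins : S = insert c S' := (Finset.insert_erase hcS).symm
      rw [hSins, ha]
      conv_rhs => rw [Finset.range_add_one, Finset.image_insert]
      rw [hc2]

lemma AP_T_rec {p : ℕ} (A : Finset (ZMod p)) (b d : ZMod p) (j : ℕ) :
    A + (Finset.range (j+2)).image (fun i : ℕ => b + (i : ZMod p) * d)
      = (A + (Finset.range (j+1)).image (fun i : ℕ => b + (i : ZMod p) * d))
        ∪ ((A + (Finset.range (j+1)).image (fun i : ℕ => b + (i : ZMod p) * d)).image (· + d)) := by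
  ext x
  simp only [Finset.mem_add, mem_union, mem_image, mem_range]
  constructor
  · rintro ⟨a, ha, z, ⟨i, hi, rfl⟩, rfl⟩
    rcases Nat.lt_succ_iff_lt_or_eq.mp hi with hi' | rfl
    · exact Or.inl ⟨a, ha, _, ⟨i, hi', rfl⟩, rfl⟩
    · right
      refine ⟨a + (b + (j : ZMod p) * d), ⟨a, ha, _, ⟨j, Nat.lt_succ_self j, rfl⟩, rfl⟩, ?_⟩
      push_cast
      ring
  · rintro (⟨a, ha, z, ⟨i, hi, rfl⟩, rfl⟩ | ⟨y, ⟨a, ha, z, ⟨i, hi, rfl⟩, rfl⟩, rfl⟩)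
    · exact ⟨a, ha, _, ⟨i, hi.trans (Nat.lt_succ_self _), rfl⟩, rfl⟩
    · exact ⟨a, ha, _, ⟨i + 1, by omega, rfl⟩, by push_cast; ring⟩

lemma AP_sdiff_filter {p : ℕ} (d : ZMod p) (S : Finset (ZMod p)) :
    ((S.image (· + d)) \ S).card = (S.filter (fun x => x + d ∉ S)).card := by
  rw [← Finset.card_image_of_injective (S.filter (fun x => x + d ∉ S)) (add_left_injective d)]
  congr 1
  ext x
  simp only [mem_sdiff, mem_image, mem_filter]
  constructor
  · rintro ⟨⟨y, hy, rfl⟩, hx⟩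
    exact ⟨y, ⟨hy, hx⟩, rfl⟩
  · rintro ⟨y, ⟨hy, hyd⟩, rfl⟩
    exact ⟨⟨y, hy, rfl⟩, hyd⟩

theorem stmt5 (p : ℕ) (hp : p.Prime) (A B : Finset (ZMod p))
    (hA : A.Nonempty) (hB : B.Nonempty) (hB3 : 3 ≤ B.card) (d : ZMod p)
    (hsum : (A + B).card ≤ A.card + B.card)
    (hlt : A.card + B.card < p)
    (hAP : IsAPWith B d) :
    IsAPWith (A + B) d := by
  obtain ⟨hd, b, hBeq⟩ := hAP
  obtain ⟨m, hm⟩ : ∃ m, B.card = m + 1 := ⟨B.card - 1, by omega⟩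
  have hm2 : 2 ≤ m := by omega
  set f : ℕ → ZMod p := fun i : ℕ => b + (i : ZMod p) * d with hf
  have hB' : B = (Finset.range (m+1)).image f := by rw [hBeq, hm]
  set T : ℕ → Finset (ZMod p) := fun j => A + (Finset.range (j+1)).image f with hT
  set e : ℕ → ℕ := fun j => (((T j).image (· + d)) \ T j).card with he
  have hrec : ∀ j, T (j+1) = T j ∪ (T j).image (· + d) := fun j => AP_T_rec A b d j
  have hcardrec : ∀ j, (T (j+1)).card = (T j).card + e j := by
    intro j
    rw [hrec j, union_comm, ← Finset.card_sdiff_add_card]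
    simp only [he]
    omega
  have hanti : ∀ j, e (j+1) ≤ e j := by
    intro j
    apply Finset.card_le_card_of_injOn (fun x => x - d)
    · intro x hx
      simp only [mem_coe, mem_sdiff, mem_image] at hx ⊢
      obtain ⟨⟨t, ht, rfl⟩, hnot⟩ := hx
      rw [hrec j] at ht
      have hnot1 : t + d ∉ T j := fun h => hnot (by rw [hrec j]; exact mem_union_left _ h)
      have hnot2 : t + d ∉ (T j).image (· + d) := fun h => hnot (by rw [hrec j]; exact mem_union_right _ h)
      have htj : t ∉ T j := fun h => hnot2 (mem_image_of_mem _ h)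
      have htimg : t ∈ (T j).image (· + d) := (mem_union.mp ht).resolve_left htj
      constructor
      · rw [add_sub_cancel_right]
        exact mem_image.mp htimg
      · rw [add_sub_cancel_right]
        exact htj
    · exact (sub_left_injective).injOn
  have hAnti : Antitone e := antitone_nat_of_succ_le hanti
  have hpos : ∀ j, (T j).Nonempty → (T j).card < p → 1 ≤ e j := by
    intro j hne hlt'
    by_contra h
    have h0 : e j = 0 := by omega
    have hsub : (T j).image (· + d) ⊆ T j := by
      rw [← Finset.sdiff_eq_empty_iff_subset]
      exact card_eq_zero.mp h0
    have heq : (T j).image (· + d) = T j :=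
      Finset.eq_of_subset_of_card_le hsub
        (le_of_eq (Finset.card_image_of_injective _ (add_left_injective d)).symm)
    have hcl : ∀ x ∈ T j, x + d ∈ T j := fun x hx => heq ▸ Finset.mem_image_of_mem _ hx
    have := AP_closure_card hp hd hne hcl
    omega
  have hsumcard : ∀ j, (T j).card = A.card + ∑ i ∈ Finset.range j, e i := by
    intro j
    induction j with
    | zero =>
      simp only [Finset.sum_range_zero, add_zero, hT]
      have h1 : (Finset.range 1).image f = {f 0} := by simp
      rw [h1, Finset.card_add_singleton]
    | succ j ih =>
      rw [hcardrec j, ih, Finset.sum_range_succ]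
      omega
  have hTm : T m = A + B := by rw [hT, hB']
  have hne : (A + B).Nonempty := hA.add hB
  have hcardlt : (A + B).card < p := lt_of_le_of_lt hsum hlt
  have h1 : 1 ≤ e m := hpos m (hTm ▸ hne) (hTm ▸ hcardlt)
  have hsumge : A.card + m * e m ≤ (A + B).card := by
    rw [← hTm, hsumcard m]
    have hh : m * e m ≤ ∑ i ∈ Finset.range m, e i := by
      calc m * e m = ∑ _i ∈ Finset.range m, e m := by rw [Finset.sum_const, card_range, smul_eq_mul]
      _ ≤ ∑ i ∈ Finset.range m, e i := Finset.sum_le_sum (fun i hi => hAnti (le_of_lt (mem_range.mp hi)))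
    omega
  have hle : (A + B).card ≤ A.card + (m + 1) := by rw [← hm]; exact hsum
  have hem : e m = 1 := by
    by_contra h
    have h2 : 2 ≤ e m := by omega
    have h3 : m * 2 ≤ m * e m := Nat.mul_le_mul_left m h2
    omega
  have hfilter : ((A + B).filter (fun x => x + d ∉ (A + B))).card = 1 := by
    rw [← AP_sdiff_filter d (A + B)]
    rw [← hTm]
    exact hem
  obtain ⟨a, ha⟩ := AP_arc hp hd (A + B).card (A + B) rfl hne hcardlt hfilter
  exact ⟨hd, a, ha⟩
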